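/- Let u : ℂ → ℝ be a measurable function, integrable on every closed disk, satisfying for every z ∈ ℂ and r > 0 the pointwise sub-mean inequality max(u(z),0) ≤ (1/(π r²)) ∫_{|z'-z| ≤ r} max(u(z'),0) dλ(z'). Let E ⊆ ℂ be a measurable set, and assume u(z) ≤ 0 for all z ∈ ℂ \ E. Then for every r > 0: B_{u⁺}^{rad}(r) ≤ 4 · B_{u⁺}^{rad}(2r) · λ(E ∩ {|z| ≤ r}) / (π r²), where u⁺(z) := max(u(z), 0) and B_{u⁺}^{rad}(r) := (1/(π r²)) ∫_{|z'| ≤ r} u⁺(z') dλ(z'). -/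

import Mathlib

open MeasureTheory Metric

/-- If `u⁺ = max(u, ·0)` satisfies the pointwise sub-mean inequality over closed disks and
`u ≤ 0` off a measurable set `E`, then for every `r > 0` the radial mean of `u⁺` satisfies
`B_{u⁺}^{rad}(r) ≤ 4 · B_{u⁺}^{rad}(2r) · λ(E ∩ closedBall 0 r) / (π r²)`. -/
theorem radialMean_posPart_le_of_nonpos_off_exceptional
    (u : ℂ → ℝ) (hu : Measurable u)
    (hint : ∀ (z : ℂ) (r : ℝ), IntegrableOn u (closedBall z r) volume)
    (hsub : ∀ (z : ℂ) (r : ℝ), 0 < r →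
      max (u z) 0 ≤ (1 / (Real.pi * r ^ 2)) * ∫ z' in closedBall z r, max (u z') 0)
    (E : Set ℂ) (hE : MeasurableSet E)
    (hneg : ∀ z ∉ E, u z ≤ 0) :
    ∀ r : ℝ, 0 < r →
      (1 / (Real.pi * r ^ 2)) * ∫ z' in closedBall (0 : ℂ) r, max (u z') 0 ≤
        4 * ((1 / (Real.pi * (2 * r) ^ 2)) *
            ∫ z' in closedBall (0 : ℂ) (2 * r), max (u z') 0) *
          ((volume (E ∩ closedBall (0 : ℂ) r)).toReal / (Real.pi * r ^ 2)) := by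
  intro r hr
  have hπ : (0:ℝ) < Real.pi := Real.pi_pos
  have hπr : (0:ℝ) < Real.pi * r ^ 2 := by positivity
  set f : ℂ → ℝ := fun z => max (u z) 0 with hf
  have hf_nonneg : ∀ z, 0 ≤ f z := fun z => le_max_right _ _
  have hfint : ∀ (z : ℂ) (s : ℝ), IntegrableOn f (closedBall z s) volume :=
    fun z s => (hint z s).pos_part
  set M : ℝ := (1 / (Real.pi * r ^ 2)) * ∫ z' in closedBall (0:ℂ) (2*r), f z' with hM
  have hI2_nonneg : 0 ≤ ∫ z' in closedBall (0:ℂ) (2*r), f z' :=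
    setIntegral_nonneg measurableSet_closedBall (fun z _ => hf_nonneg z)
  have hMnn : 0 ≤ M := by positivity
  -- pointwise bound on the small ball
  have hbound : ∀ z ∈ closedBall (0:ℂ) r, f z ≤ M := by
    intro z hz
    have h1 := hsub z r hr
    have hsubset : closedBall z r ⊆ closedBall (0:ℂ) (2*r) := by
      intro w hw
      simp only [mem_closedBall] at *
      calc dist w 0 ≤ dist w z + dist z 0 := dist_triangle _ _ _
        _ ≤ r + r := add_le_add hw hz
        _ = 2 * r := by ring
    have h2 : (∫ z' in closedBall z r, f z') ≤ ∫ z' in closedBall (0:ℂ) (2*r), f z' :=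
      setIntegral_mono_set (hfint 0 (2*r)) (Filter.Eventually.of_forall hf_nonneg)
        (HasSubset.Subset.eventuallyLE hsubset)
    calc f z ≤ (1 / (Real.pi * r ^ 2)) * ∫ z' in closedBall z r, f z' := h1
      _ ≤ M := mul_le_mul_of_nonneg_left h2 (by positivity)
  -- the integral localizes to E
  have hsplit : (∫ z' in closedBall (0:ℂ) r, f z')
      = ∫ z' in E ∩ closedBall (0:ℂ) r, f z' := by
    have hind : ∀ z, f z = E.indicator f z := by
      intro z
      by_cases hz : z ∈ E
      · simp [Set.indicator_of_mem hz]
      · simp [Set.indicator_of_notMem hz, hf, max_eq_right (hneg z hz)]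
    calc (∫ z' in closedBall (0:ℂ) r, f z')
        = ∫ z' in closedBall (0:ℂ) r, E.indicator f z' := by
          exact setIntegral_congr_fun measurableSet_closedBall (fun z _ => hind z)
      _ = ∫ z' in closedBall (0:ℂ) r ∩ E, f z' := setIntegral_indicator hE
      _ = ∫ z' in E ∩ closedBall (0:ℂ) r, f z' := by rw [Set.inter_comm]
  have hmeas_fin : volume (E ∩ closedBall (0:ℂ) r) < ⊤ :=
    lt_of_le_of_lt (measure_mono Set.inter_subset_right) measure_closedBall_lt_top
  set m : ℝ := (volume (E ∩ closedBall (0:ℂ) r)).toReal with hm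
  have h3 : (∫ z' in E ∩ closedBall (0:ℂ) r, f z') ≤ M * m := by
    calc (∫ z' in E ∩ closedBall (0:ℂ) r, f z')
        ≤ ∫ _ in E ∩ closedBall (0:ℂ) r, M :=
          setIntegral_mono_on ((hfint 0 r).mono_set Set.inter_subset_right)
            (integrableOn_const hmeas_fin.ne)
            (hE.inter measurableSet_closedBall) (fun z hz => hbound z hz.2)
      _ = m * M := by rw [setIntegral_const]; simp [smul_eq_mul]; exact Or.inl rfl
      _ = M * m := mul_comm _ _
  have hfinal : (1 / (Real.pi * r ^ 2)) * ∫ z' in closedBall (0:ℂ) r, f z'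
      ≤ (1 / (Real.pi * r ^ 2)) * (M * m) := by
    rw [hsplit]
    exact mul_le_mul_of_nonneg_left h3 (by positivity)
  refine hfinal.trans_eq ?_
  rw [hM]
  have h4 : (2 * r) ^ 2 = 4 * r ^ 2 := by ring
  field_simp
  ring
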